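/- arXiv:2509.02104 — 2 statements merged into one kernel-verified Lean document; each statement's English description precedes it below -/
import Mathlib

section
/- Let a > 0, b > 0, c > 0, and let (ρ_n) be a sequence of complex numbers with |Im ρ_n| ≤ c for all n such that the exponentials (exp(i ρ_n x)) form a Riesz basis in L²(-a,a). Then there exists a constant C > 0 such that for every f ∈ L²(-b,b), the sum over n of |∫_{-b}^{b} f(x) exp(i ρ_n x) dx|² is at most C ∫_{-b}^{b} |f(x)|² dx. -/
open MeasureTheory Complex ComplexConjugate
open scoped ComplexInnerProductSpace

lemma hb_parseval {H : Type*} [NormedAddCommGroup H] [InnerProductSpace ℂ H]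
    (B : HilbertBasis ℕ ℂ H) (x : H) :
    HasSum (fun n => ‖(⟪x, B n⟫ : ℂ)‖ ^ 2) (‖x‖ ^ 2) := by
  have h := (B.hasSum_inner_mul_inner x x).mapL Complex.reCLM
  convert h using 2 with n
  · rw [show (inner ℂ (B n) x : ℂ) = conj (inner ℂ x (B n)) from (inner_conj_symm _ _).symm,
      Complex.mul_conj]
    simp [Complex.sq_norm]
  · exact (inner_self_eq_norm_sq (𝕜 := ℂ) x).symm

lemma riesz_bessel {H : Type*} [NormedAddCommGroup H] [InnerProductSpace ℂ H] [CompleteSpace H]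
    (E : ℕ → H)
    (hR : ∃ (B : HilbertBasis ℕ ℂ H) (T : H ≃L[ℂ] H), ∀ n, E n = T (B n)) :
    ∃ C > 0, ∀ h : H, Summable (fun n => ‖(⟪h, E n⟫ : ℂ)‖ ^ 2) ∧
      ∑' n, ‖(⟪h, E n⟫ : ℂ)‖ ^ 2 ≤ C * ‖h‖ ^ 2 := by
  obtain ⟨B, T, hT⟩ := hR
  set S := ContinuousLinearMap.adjoint (T : H →L[ℂ] H) with hS
  refine ⟨‖S‖ ^ 2 + 1, by positivity, fun h => ?_⟩
  have key : ∀ n, (⟪h, E n⟫ : ℂ) = ⟪S h, B n⟫ := by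
    intro n
    rw [hT n]
    exact (ContinuousLinearMap.adjoint_inner_left (T : H →L[ℂ] H) (B n) h).symm
  have hs := hb_parseval B (S h)
  simp only [key]
  refine ⟨hs.summable, ?_⟩
  rw [hs.tsum_eq]
  have h1 : ‖S h‖ ≤ ‖S‖ * ‖h‖ := S.le_opNorm h
  nlinarith [norm_nonneg (S h), norm_nonneg h, norm_nonneg S]

/-- Bessel-type inequality on `(-b,b)` for a family of exponentials
`exp(i ρ_n x)` that forms a Riesz basis of `L²(-a,a)` (i.e., the image of a Hilbert
(orthonormal) basis under a bounded invertible operator) and whose frequencies have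
uniformly bounded imaginary parts. -/
theorem exp_riesz_basis_bessel_on_larger_interval
    (a b c : ℝ) (ha : 0 < a) (hb : 0 < b) (hc : 0 < c)
    (ρ : ℕ → ℂ) (hIm : ∀ n, |(ρ n).im| ≤ c)
    (E : ℕ → Lp ℂ 2 (volume.restrict (Set.Ioo (-a) a)))
    (hE : ∀ n, (E n : ℝ → ℂ) =ᵐ[volume.restrict (Set.Ioo (-a) a)]
      fun x => Complex.exp (Complex.I * ρ n * (x : ℂ)))
    (hRiesz : ∃ (B : HilbertBasis ℕ ℂ (Lp ℂ 2 (volume.restrict (Set.Ioo (-a) a))))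
      (T : Lp ℂ 2 (volume.restrict (Set.Ioo (-a) a)) ≃L[ℂ]
        Lp ℂ 2 (volume.restrict (Set.Ioo (-a) a))),
      ∀ n, E n = T (B n)) :
    ∃ C > 0, ∀ f : ℝ → ℂ, MemLp f 2 (volume.restrict (Set.Ioo (-b) b)) →
      Summable (fun n : ℕ =>
        ‖∫ x in Set.Ioo (-b) b, f x * Complex.exp (Complex.I * ρ n * (x : ℂ))‖ ^ 2) ∧
      ∑' n : ℕ, ‖∫ x in Set.Ioo (-b) b, f x * Complex.exp (Complex.I * ρ n * (x : ℂ))‖ ^ 2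
        ≤ C * ∫ x in Set.Ioo (-b) b, ‖f x‖ ^ 2 := by
  obtain ⟨C₀, hC₀pos, hBessel⟩ := riesz_bessel E hRiesz
  -- Setup of subdivision
  set k : ℕ := ⌈b / a⌉₊ with hkdef
  have hk1 : 1 ≤ k := Nat.one_le_ceil_iff.mpr (by positivity)
  have hkR : (1 : ℝ) ≤ (k : ℝ) := by exact_mod_cast hk1
  have hkpos : (0 : ℝ) < (k : ℝ) := by linarith
  set δ : ℝ := b / k with hδdef
  have hδpos : 0 < δ := by positivity
  have hkδ : (k : ℝ) * δ = b := by
    rw [hδdef]; field_simp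
  have hδa : δ ≤ a := by
    rw [hδdef, div_le_iff₀ hkpos]
    have h1 : b / a ≤ (k : ℝ) := Nat.le_ceil (b / a)
    calc b = (b / a) * a := by field_simp
      _ ≤ (k : ℝ) * a := mul_le_mul_of_nonneg_right h1 ha.le
      _ = a * k := mul_comm _ _
  set t : ℕ → ℝ := fun j => -b + (2 * j + 1) * δ with htdef
  set l : ℕ → ℝ := fun j => -b + 2 * j * δ with hldef
  have htb : ∀ j < k, |t j| ≤ b := by
    intro j hj
    have hjk : (j : ℝ) + 1 ≤ (k : ℝ) := by exact_mod_cast hj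
    rw [abs_le]
    constructor
    · simp only [htdef]
      nlinarith
    · simp only [htdef]
      nlinarith
  set M : ℝ := Real.exp (c * b) with hMdef
  have hMpos : 0 < M := Real.exp_pos _
  have hexpb : ∀ n (x : ℝ), |x| ≤ b →
      ‖Complex.exp (Complex.I * ρ n * (x : ℂ))‖ ≤ M := by
    intro n x hx
    rw [Complex.norm_exp]
    have hre : (Complex.I * ρ n * (x : ℂ)).re = -(ρ n).im * x := by
      simp [Complex.mul_re, Complex.mul_im]
    rw [hre, hMdef]
    apply Real.exp_le_exp.2
    calc -(ρ n).im * x ≤ |(-(ρ n).im * x)| := le_abs_self _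
      _ = |(ρ n).im| * |x| := by rw [abs_mul, abs_neg]
      _ ≤ c * b := mul_le_mul (hIm n) hx (abs_nonneg _) hc.le
  refine ⟨(k : ℝ) * M ^ 2 * C₀, by positivity, fun f hf => ?_⟩
  -- replace f by its indicator version f'
  set f' : ℝ → ℂ := (Set.Ioo (-b) b).indicator f with hf'def
  have hae : f' =ᵐ[volume.restrict (Set.Ioo (-b) b)] f :=
    indicator_ae_eq_restrict measurableSet_Ioo
  have hf'vol : MemLp f' 2 volume :=
    (memLp_indicator_iff_restrict measurableSet_Ioo).2 hf
  have hint1 : ∀ n, (∫ x in Set.Ioo (-b) b, f x * Complex.exp (Complex.I * ρ n * (x : ℂ)))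
      = ∫ x in Set.Ioo (-b) b, f' x * Complex.exp (Complex.I * ρ n * (x : ℂ)) := by
    intro n
    refine integral_congr_ae ?_
    filter_upwards [hae] with x hx
    rw [hx]
  have hint2 : (∫ x in Set.Ioo (-b) b, ‖f x‖ ^ 2)
      = ∫ x in Set.Ioo (-b) b, ‖f' x‖ ^ 2 := by
    refine integral_congr_ae ?_
    filter_upwards [hae] with x hx
    rw [hx]
  -- translated pieces
  set g : ℕ → ℝ → ℂ := fun j => (Set.Ioo (-δ) δ).indicator (fun y => f' (y + t j)) with hgdef
  have hg : ∀ j, MemLp (g j) 2 volume := by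
    intro j
    exact ((hf'vol.comp_measurePreserving
      (measurePreserving_add_right volume (t j)))).indicator measurableSet_Ioo
  have hgc : ∀ j, MemLp (fun y => conj (g j y)) 2 volume := by
    intro j
    have h2 := (((RCLike.conjCLE (K := ℂ)) : ℂ →L[ℝ] ℂ)).comp_memLp' (hg j)
    simpa [Function.comp_def, RCLike.conjCLE_apply] using h2
  set h : ℕ → Lp ℂ 2 (volume.restrict (Set.Ioo (-a) a)) :=
    fun j => ((hgc j).restrict (Set.Ioo (-a) a)).toLp (fun y => conj (g j y)) with hhdef
  have hIooδ : Set.Ioo (-δ) δ ⊆ Set.Ioo (-a) a := Set.Ioo_subset_Ioo (by linarith) hδa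
  -- inner products as integrals
  have keyInner : ∀ j n, (⟪h j, E n⟫ : ℂ)
      = ∫ y in (-δ)..δ, f' (y + t j) * Complex.exp (Complex.I * ρ n * (y : ℂ)) := by
    intro j n
    rw [MeasureTheory.L2.inner_def]
    have e1 : (fun y => (inner ℂ ((h j : ℝ → ℂ) y) ((E n : ℝ → ℂ) y) : ℂ))
        =ᵐ[volume.restrict (Set.Ioo (-a) a)]
        (fun y => g j y * Complex.exp (Complex.I * ρ n * (y : ℂ))) := by
      filter_upwards [((hgc j).restrict (Set.Ioo (-a) a)).coeFn_toLp, hE n] with y h1 h2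
      rw [show ((h j : ℝ → ℂ) y) = conj (g j y) from h1, h2, RCLike.inner_apply]
      simp
      ring
    rw [integral_congr_ae e1]
    have e2 : ∀ y, g j y * Complex.exp (Complex.I * ρ n * (y : ℂ))
        = (Set.Ioo (-δ) δ).indicator
          (fun y => f' (y + t j) * Complex.exp (Complex.I * ρ n * (y : ℂ))) y := by
      intro y
      by_cases hy : y ∈ Set.Ioo (-δ) δ
      · simp [hgdef, Set.indicator_of_mem hy]
      · simp [hgdef, Set.indicator_of_notMem hy]
    simp_rw [e2]
    rw [setIntegral_indicator measurableSet_Ioo, Set.inter_eq_right.mpr hIooδ,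
      intervalIntegral.integral_of_le (by linarith), integral_Ioc_eq_integral_Ioo]
  -- norms of pieces
  have keyNormPiece : ∀ j, ‖h j‖ ^ 2 = ∫ y in (-δ)..δ, ‖f' (y + t j)‖ ^ 2 := by
    intro j
    have i2 : ‖h j‖ ^ 2 = ∫ y in Set.Ioo (-a) a, ‖g j y‖ ^ 2 := by
      rw [← inner_self_eq_norm_sq (𝕜 := ℂ) (h j), MeasureTheory.L2.inner_def,
        ← integral_re (L2.integrable_inner (𝕜 := ℂ) (h j) (h j))]
      refine integral_congr_ae ?_
      filter_upwards [((hgc j).restrict (Set.Ioo (-a) a)).coeFn_toLp] with y h1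
      rw [RCLike.inner_apply, show ((h j : ℝ → ℂ) y) = conj (g j y) from h1, Complex.conj_conj,
        RCLike.conj_mul]
      rw [← RCLike.ofReal_pow, RCLike.ofReal_re]
    rw [i2]
    have e2 : ∀ y, (‖g j y‖ ^ 2 : ℝ)
        = (Set.Ioo (-δ) δ).indicator (fun y => ‖f' (y + t j)‖ ^ 2) y := by
      intro y
      by_cases hy : y ∈ Set.Ioo (-δ) δ
      · simp [hgdef, Set.indicator_of_mem hy]
      · simp [hgdef, Set.indicator_of_notMem hy]
    simp_rw [e2]
    rw [setIntegral_indicator measurableSet_Ioo, Set.inter_eq_right.mpr hIooδ,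
      intervalIntegral.integral_of_le (by linarith), integral_Ioc_eq_integral_Ioo]
    -- endpoints
  have hl0 : l 0 = -b := by simp [hldef]
  have hlk : l k = b := by
    have : ((k : ℝ)) * δ = b := hkδ
    simp only [hldef]
    nlinarith
  -- translation identity for interval integrals
  have htransC : ∀ (F : ℝ → ℂ) (j : ℕ),
      (∫ x in l j..l (j + 1), F x) = ∫ y in (-δ)..δ, F (y + t j) := by
    intro F j
    rw [intervalIntegral.integral_comp_add_right F (t j)]
    congr 1
    · simp only [hldef, htdef]; push_cast; ring
    · simp only [hldef, htdef]; push_cast; ring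
  have htransR : ∀ (F : ℝ → ℝ) (j : ℕ),
      (∫ x in l j..l (j + 1), F x) = ∫ y in (-δ)..δ, F (y + t j) := by
    intro F j
    rw [intervalIntegral.integral_comp_add_right F (t j)]
    congr 1
    · simp only [hldef, htdef]; push_cast; ring
    · simp only [hldef, htdef]; push_cast; ring
  -- integrability
  haveI : Fact (volume (Set.Ioo (-b) b) < ⊤) := ⟨measure_Ioo_lt_top⟩
  have hFint : ∀ n, Integrable
      (fun x => f' x * Complex.exp (Complex.I * ρ n * (x : ℂ))) volume := by
    intro n
    have e3 : ∀ x, f' x * Complex.exp (Complex.I * ρ n * (x : ℂ))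
        = (Set.Ioo (-b) b).indicator
          (fun x => f x * Complex.exp (Complex.I * ρ n * (x : ℂ))) x := by
      intro x
      by_cases hx : x ∈ Set.Ioo (-b) b
      · simp [hf'def, Set.indicator_of_mem hx]
      · simp [hf'def, Set.indicator_of_notMem hx]
    simp_rw [e3]
    rw [integrable_indicator_iff measurableSet_Ioo]
    have hexpm : AEStronglyMeasurable (fun x : ℝ => Complex.exp (Complex.I * ρ n * (x : ℂ)))
        (volume.restrict (Set.Ioo (-b) b)) := by
      apply Continuous.aestronglyMeasurable
      exact Complex.continuous_exp.comp (continuous_const.mul Complex.continuous_ofReal)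
    have hbdd : ∀ᵐ x : ℝ ∂(volume.restrict (Set.Ioo (-b) b)),
        ‖Complex.exp (Complex.I * ρ n * (x : ℂ))‖ ≤ M := by
      filter_upwards [ae_restrict_mem measurableSet_Ioo] with x hx
      exact hexpb n x (abs_le.mpr ⟨hx.1.le, hx.2.le⟩)
    have hmul := Integrable.bdd_mul (hf.integrable one_le_two) hexpm hbdd
    exact hmul.congr (Filter.Eventually.of_forall fun x => mul_comm _ _)
  have hG : Integrable (fun x => ‖f' x‖ ^ 2) volume := hf'vol.norm.integrable_sq
  -- decomposition of the integral
  have keyDecomp : ∀ n, (∫ x in Set.Ioo (-b) b, f' x * Complex.exp (Complex.I * ρ n * (x : ℂ)))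
      = ∑ j ∈ Finset.range k,
          Complex.exp (Complex.I * ρ n * ((t j : ℝ) : ℂ)) * (⟪h j, E n⟫ : ℂ) := by
    intro n
    have h1 : (∫ x in Set.Ioo (-b) b, f' x * Complex.exp (Complex.I * ρ n * (x : ℂ)))
        = ∫ x in (l 0)..(l k), f' x * Complex.exp (Complex.I * ρ n * (x : ℂ)) := by
      rw [hl0, hlk, intervalIntegral.integral_of_le (by linarith),
        integral_Ioc_eq_integral_Ioo]
    rw [h1, ← intervalIntegral.sum_integral_adjacent_intervals
        (fun j _ => (hFint n).intervalIntegrable)]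
    refine Finset.sum_congr rfl fun j hj => ?_
    rw [htransC]
    have e4 : ∀ y : ℝ, f' (y + t j) * Complex.exp (Complex.I * ρ n * (((y + t j) : ℝ) : ℂ))
        = Complex.exp (Complex.I * ρ n * ((t j : ℝ) : ℂ))
          * (f' (y + t j) * Complex.exp (Complex.I * ρ n * (y : ℂ))) := by
      intro y
      rw [show (Complex.I * ρ n * (((y + t j) : ℝ) : ℂ))
          = Complex.I * ρ n * (y : ℂ) + Complex.I * ρ n * ((t j : ℝ) : ℂ) by push_cast; ring,
        Complex.exp_add]
      ring
    simp_rw [e4]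
    rw [intervalIntegral.integral_const_mul, keyInner j n]
  -- decomposition of the norm integral
  have keyNorm : (∫ x in Set.Ioo (-b) b, ‖f' x‖ ^ 2) = ∑ j ∈ Finset.range k, ‖h j‖ ^ 2 := by
    have h1 : (∫ x in Set.Ioo (-b) b, ‖f' x‖ ^ 2)
        = ∫ x in (l 0)..(l k), ‖f' x‖ ^ 2 := by
      rw [hl0, hlk, intervalIntegral.integral_of_le (by linarith),
        integral_Ioc_eq_integral_Ioo]
    rw [h1, ← intervalIntegral.sum_integral_adjacent_intervals
        (fun j _ => hG.intervalIntegrable)]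
    refine Finset.sum_congr rfl fun j hj => ?_
    rw [htransR, keyNormPiece j]
  -- assembly
  simp only [hint1, hint2]
  have hsummj : ∀ j, Summable (fun n => ‖(⟪h j, E n⟫ : ℂ)‖ ^ 2) := fun j => (hBessel (h j)).1
  have hbd : ∀ n, ‖∫ x in Set.Ioo (-b) b, f' x * Complex.exp (Complex.I * ρ n * (x : ℂ))‖ ^ 2
      ≤ (k : ℝ) * M ^ 2 * ∑ j ∈ Finset.range k, ‖(⟪h j, E n⟫ : ℂ)‖ ^ 2 := by
    intro n
    rw [keyDecomp n]
    have s1 := norm_sum_le (Finset.range k)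
      (fun j => Complex.exp (Complex.I * ρ n * ((t j : ℝ) : ℂ)) * (⟪h j, E n⟫ : ℂ))
    have s2 := sq_sum_le_card_mul_sum_sq (s := Finset.range k)
      (f := fun j => ‖Complex.exp (Complex.I * ρ n * ((t j : ℝ) : ℂ)) * (⟪h j, E n⟫ : ℂ)‖)
    have s3 : ∀ j ∈ Finset.range k,
        ‖Complex.exp (Complex.I * ρ n * ((t j : ℝ) : ℂ)) * (⟪h j, E n⟫ : ℂ)‖ ^ 2
          ≤ M ^ 2 * ‖(⟪h j, E n⟫ : ℂ)‖ ^ 2 := by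
      intro j hj
      rw [norm_mul, mul_pow]
      have he := hexpb n (t j) (htb j (Finset.mem_range.mp hj))
      have h0 := norm_nonneg ((⟪h j, E n⟫ : ℂ))
      have h1 := norm_nonneg (Complex.exp (Complex.I * ρ n * ((t j : ℝ) : ℂ)))
      exact mul_le_mul_of_nonneg_right (pow_le_pow_left₀ h1 he 2) (sq_nonneg _)
    calc ‖∑ j ∈ Finset.range k,
          Complex.exp (Complex.I * ρ n * ((t j : ℝ) : ℂ)) * (⟪h j, E n⟫ : ℂ)‖ ^ 2
        ≤ (∑ j ∈ Finset.range k,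
            ‖Complex.exp (Complex.I * ρ n * ((t j : ℝ) : ℂ)) * (⟪h j, E n⟫ : ℂ)‖) ^ 2 :=
          pow_le_pow_left₀ (norm_nonneg _) s1 2
      _ ≤ (k : ℝ) * ∑ j ∈ Finset.range k,
            ‖Complex.exp (Complex.I * ρ n * ((t j : ℝ) : ℂ)) * (⟪h j, E n⟫ : ℂ)‖ ^ 2 := by
          simpa using s2
      _ ≤ (k : ℝ) * ∑ j ∈ Finset.range k, M ^ 2 * ‖(⟪h j, E n⟫ : ℂ)‖ ^ 2 := by
          exact mul_le_mul_of_nonneg_left (Finset.sum_le_sum s3) (by positivity)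
      _ = (k : ℝ) * M ^ 2 * ∑ j ∈ Finset.range k, ‖(⟪h j, E n⟫ : ℂ)‖ ^ 2 := by
          rw [← Finset.mul_sum]; ring
  have hsumm : Summable (fun n => (k : ℝ) * M ^ 2 * ∑ j ∈ Finset.range k, ‖(⟪h j, E n⟫ : ℂ)‖ ^ 2) :=
    (summable_sum (fun j _ => hsummj j)).mul_left _
  have hS : Summable (fun n =>
      ‖∫ x in Set.Ioo (-b) b, f' x * Complex.exp (Complex.I * ρ n * (x : ℂ))‖ ^ 2) :=
    Summable.of_nonneg_of_le (fun n => sq_nonneg _) hbd hsumm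
  refine ⟨hS, ?_⟩
  calc (∑' n, ‖∫ x in Set.Ioo (-b) b, f' x * Complex.exp (Complex.I * ρ n * (x : ℂ))‖ ^ 2)
      ≤ ∑' n, ((k : ℝ) * M ^ 2 * ∑ j ∈ Finset.range k, ‖(⟪h j, E n⟫ : ℂ)‖ ^ 2) :=
        Summable.tsum_le_tsum hbd hS hsumm
    _ = (k : ℝ) * M ^ 2 * ∑' n, ∑ j ∈ Finset.range k, ‖(⟪h j, E n⟫ : ℂ)‖ ^ 2 := tsum_mul_left
    _ = (k : ℝ) * M ^ 2 * ∑ j ∈ Finset.range k, ∑' n, ‖(⟪h j, E n⟫ : ℂ)‖ ^ 2 := by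
        rw [Summable.tsum_finsetSum (fun j _ => hsummj j)]
    _ ≤ (k : ℝ) * M ^ 2 * ∑ j ∈ Finset.range k, C₀ * ‖h j‖ ^ 2 := by
        refine mul_le_mul_of_nonneg_left (Finset.sum_le_sum fun j _ => (hBessel (h j)).2)
          (by positivity)
    _ = (k : ℝ) * M ^ 2 * C₀ * ∑ j ∈ Finset.range k, ‖h j‖ ^ 2 := by
        rw [← Finset.mul_sum]; ring
    _ = (k : ℝ) * M ^ 2 * C₀ * ∫ x in Set.Ioo (-b) b, ‖f' x‖ ^ 2 := by rw [keyNorm]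
end

section
/- Fix α > 0 and ν_n = πn + iα, n ∈ ℤ. There exist constants c, C > 0 such that for every f ∈ L²(-1,1), c ‖f‖_{L²(-1,1)} ≤ ‖( ∫_{-1}^{1} f(t) exp(i ν_n t) dt )_{n∈ℤ}‖_{ℓ²} ≤ C ‖f‖_{L²(-1,1)}. -/
open MeasureTheory Complex Set
open scoped ENNReal

local notation "π" => Real.pi

lemma parseval_Ioc (g : ℝ → ℂ) (hsm : StronglyMeasurable g)
    (hg : MemLp g 2 (volume.restrict (Set.Ioc (-1:ℝ) 1))) :
    Summable (fun n : ℤ =>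
      ‖∫ t in Set.Ioc (-1:ℝ) 1, g t * Complex.exp ((π : ℂ) * n * Complex.I * t)‖ ^ 2) ∧
    ∑' n : ℤ, ‖∫ t in Set.Ioc (-1:ℝ) 1, g t * Complex.exp ((π : ℂ) * n * Complex.I * t)‖ ^ 2
      = 2 * ∫ t in Set.Ioc (-1:ℝ) 1, ‖g t‖ ^ 2 := by
  haveI : Fact ((0:ℝ) < 2) := ⟨two_pos⟩
  have hIoc : (-1:ℝ) + 2 = 1 := by norm_num
  set G : AddCircle (2:ℝ) → ℂ := AddCircle.liftIoc 2 (-1) g with hG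
  have hGmeas : Measurable G := by
    have : G = g ∘ (Subtype.val) ∘ (AddCircle.equivIoc 2 (-1)) := rfl
    rw [this]
    exact hsm.measurable.comp (measurable_subtype_coe.comp
      (AddCircle.measurableEquivIoc 2 (-1)).measurable)
  have hcomp : (fun x : ℝ => G ↑x) =ᵐ[volume.restrict (Set.Ioc (-1:ℝ) 1)] g := by
    filter_upwards [ae_restrict_mem measurableSet_Ioc] with x hx
    exact AddCircle.liftIoc_coe_apply (by rwa [hIoc])
  have hmap : Measure.map ((↑) : ℝ → AddCircle (2:ℝ)) (volume.restrict (Set.Ioc (-1:ℝ) 1))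
      = volume := by
    have := (AddCircle.measurePreserving_mk 2 (-1)).map_eq
    rwa [hIoc] at this
  have hGvol : MemLp G 2 (volume : Measure (AddCircle (2:ℝ))) := by
    refine ⟨hGmeas.aestronglyMeasurable, ?_⟩
    rw [← hmap, eLpNorm_map_measure (hGmeas.aestronglyMeasurable.mono_measure le_rfl)
      (AddCircle.measurable_mk').aemeasurable]
    calc eLpNorm (G ∘ ((↑) : ℝ → AddCircle (2:ℝ))) 2 (volume.restrict (Set.Ioc (-1:ℝ) 1))
        = eLpNorm g 2 (volume.restrict (Set.Ioc (-1:ℝ) 1)) := eLpNorm_congr_ae hcomp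
      _ < ⊤ := hg.2
  have hle : (AddCircle.haarAddCircle : Measure (AddCircle (2:ℝ))) ≤ volume := by
    rw [AddCircle.volume_eq_smul_haarAddCircle]
    intro s
    rw [Measure.smul_apply, smul_eq_mul]
    exact le_mul_of_one_le_left zero_le (by simp)
  have hGh : MemLp G 2 (AddCircle.haarAddCircle : Measure (AddCircle (2:ℝ))) :=
    hGvol.mono_measure hle
  set F := hGh.toLp G with hF
  have hFG : (F : AddCircle (2:ℝ) → ℂ) =ᵐ[AddCircle.haarAddCircle] G := hGh.coeFn_toLp
  have hcoeff : ∀ n : ℤ, fourierCoeff (F : AddCircle (2:ℝ) → ℂ) n = fourierCoeff G n := by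
    intro n
    refine integral_congr_ae ?_
    filter_upwards [hFG] with x hx
    rw [hx]
  -- Parseval
  have P := tsum_sq_fourierCoeff F
  have hrhs : (∫ t : AddCircle (2:ℝ), ‖(F : AddCircle (2:ℝ) → ℂ) t‖ ^ 2 ∂AddCircle.haarAddCircle)
      = (1/2) * ∫ t in Set.Ioc (-1:ℝ) 1, ‖g t‖ ^ 2 := by
    have h1 : (∫ t : AddCircle (2:ℝ), ‖(F : AddCircle (2:ℝ) → ℂ) t‖ ^ 2 ∂AddCircle.haarAddCircle)
        = ∫ t : AddCircle (2:ℝ), ‖G t‖ ^ 2 ∂AddCircle.haarAddCircle := by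
      refine integral_congr_ae ?_
      filter_upwards [hFG] with x hx
      rw [hx]
    have h2 : (∫ t : AddCircle (2:ℝ), ‖G t‖ ^ 2 ∂(volume : Measure (AddCircle (2:ℝ))))
        = 2 * ∫ t : AddCircle (2:ℝ), ‖G t‖ ^ 2 ∂AddCircle.haarAddCircle := by
      rw [AddCircle.volume_eq_smul_haarAddCircle, integral_smul_measure,
        ENNReal.toReal_ofReal (by norm_num : (0:ℝ) ≤ 2), smul_eq_mul]
    have h3 : (∫ t : AddCircle (2:ℝ), ‖G t‖ ^ 2 ∂(volume : Measure (AddCircle (2:ℝ))))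
        = ∫ t in Set.Ioc (-1:ℝ) 1, ‖g t‖ ^ 2 := by
      have := AddCircle.integral_preimage 2 (-1) (fun b => ‖G b‖ ^ 2)
      rw [hIoc] at this
      rw [← this]
      refine integral_congr_ae ?_
      filter_upwards [hcomp] with x hx
      rw [hx]
    rw [h1]
    rw [h3] at h2
    linarith [h2]
  have hsumm : Summable (fun i : ℤ => ‖fourierCoeff (F : AddCircle (2:ℝ) → ℂ) i‖ ^ 2) := by
    have hm := lp.memℓp (fourierBasis.repr F)
    rw [memℓp_gen_iff (by norm_num : (0:ℝ) < (2 : ℝ≥0∞).toReal)] at hm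
    have : (fun i : ℤ => ‖(fourierBasis.repr F) i‖ ^ ((2:ℝ≥0∞)).toReal)
        = fun i : ℤ => ‖fourierCoeff (F : AddCircle (2:ℝ) → ℂ) i‖ ^ 2 := by
      funext i
      rw [fourierBasis_repr]
      norm_num
    rwa [this] at hm
  -- coefficient identity
  have hcid : ∀ n : ℤ, (∫ t in Set.Ioc (-1:ℝ) 1, g t * Complex.exp ((π : ℂ) * n * Complex.I * t))
      = 2 * fourierCoeff G (-n) := by
    intro n
    have h := fourierCoeff_eq_intervalIntegral (T := 2) G (-n) (-1)
    rw [hIoc, neg_neg] at h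
    rw [intervalIntegral.integral_of_le (by norm_num : (-1:ℝ) ≤ 1)] at h
    have hint : (∫ x in Set.Ioc (-1:ℝ) 1, (fourier n (x : AddCircle (2:ℝ))) • G ↑x)
        = ∫ t in Set.Ioc (-1:ℝ) 1, g t * Complex.exp ((π : ℂ) * n * Complex.I * t) := by
      refine integral_congr_ae ?_
      filter_upwards [hcomp] with x hx
      rw [fourier_coe_apply, smul_eq_mul, hx, mul_comm]
      congr 1
      push_cast
      ring
    rw [hint] at h
    rw [h, Complex.real_smul]
    push_cast
    ring
  constructor
  · have : (fun n : ℤ =>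
        ‖∫ t in Set.Ioc (-1:ℝ) 1, g t * Complex.exp ((π : ℂ) * n * Complex.I * t)‖ ^ 2)
        = fun n : ℤ => 4 * ‖fourierCoeff (F : AddCircle (2:ℝ) → ℂ) (-n)‖ ^ 2 := by
      funext n
      rw [hcid n, hcoeff]
      rw [norm_mul, mul_pow]
      norm_num
    rw [this]
    have := ((Equiv.neg ℤ).summable_iff
      (f := fun i : ℤ => ‖fourierCoeff (F : AddCircle (2:ℝ) → ℂ) i‖ ^ 2)).mpr hsumm
    exact (this.mul_left 4)
  · have heq : (fun n : ℤ =>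
        ‖∫ t in Set.Ioc (-1:ℝ) 1, g t * Complex.exp ((π : ℂ) * n * Complex.I * t)‖ ^ 2)
        = fun n : ℤ => 4 * ‖fourierCoeff (F : AddCircle (2:ℝ) → ℂ) (-n)‖ ^ 2 := by
      funext n
      rw [hcid n, hcoeff]
      rw [norm_mul, mul_pow]
      norm_num
    rw [heq, tsum_mul_left]
    have : ∑' n : ℤ, ‖fourierCoeff (F : AddCircle (2:ℝ) → ℂ) (-n)‖ ^ 2
        = ∑' n : ℤ, ‖fourierCoeff (F : AddCircle (2:ℝ) → ℂ) n‖ ^ 2 :=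
      (Equiv.neg ℤ).tsum_eq (fun i : ℤ => ‖fourierCoeff (F : AddCircle (2:ℝ) → ℂ) i‖ ^ 2)
    rw [this, P, hrhs]
    ring

/-- two-sided (frame / Riesz basis) inequality for the system
`exp(i ν_n t)`, `ν_n = πn + iα` (`n ∈ ℤ`), in `L²(-1,1)`: the `ℓ²` norm of the
generalized Fourier coefficients of `f` is equivalent to `‖f‖_{L²(-1,1)}`. -/
theorem exp_pi_n_plus_i_alpha_two_sided
    (α : ℝ) (hα : 0 < α) :
    ∃ c > 0, ∃ C > 0, ∀ f : ℝ → ℂ,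
      MemLp f 2 (volume.restrict (Set.Ioo (-1 : ℝ) 1)) →
      Summable (fun n : ℤ =>
        ‖∫ t in Set.Ioo (-1 : ℝ) 1,
            f t * Complex.exp (Complex.I * ((Real.pi * n : ℝ) + α * Complex.I) * (t : ℂ))‖ ^ 2) ∧
      c * Real.sqrt (∫ t in Set.Ioo (-1 : ℝ) 1, ‖f t‖ ^ 2)
        ≤ Real.sqrt (∑' n : ℤ,
            ‖∫ t in Set.Ioo (-1 : ℝ) 1,
                f t * Complex.exp (Complex.I * ((Real.pi * n : ℝ) + α * Complex.I) * (t : ℂ))‖ ^ 2) ∧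
      Real.sqrt (∑' n : ℤ,
          ‖∫ t in Set.Ioo (-1 : ℝ) 1,
              f t * Complex.exp (Complex.I * ((Real.pi * n : ℝ) + α * Complex.I) * (t : ℂ))‖ ^ 2)
        ≤ C * Real.sqrt (∫ t in Set.Ioo (-1 : ℝ) 1, ‖f t‖ ^ 2) := by
  refine ⟨Real.sqrt 2 * Real.exp (-α), by positivity, Real.sqrt 2 * Real.exp α, by positivity,
    fun f hf => ?_⟩
  have hres : volume.restrict (Set.Ioo (-1:ℝ) 1) = volume.restrict (Set.Ioc (-1:ℝ) 1) :=
    Measure.restrict_congr_set Ioo_ae_eq_Ioc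
  rw [hres] at hf ⊢
  -- measurable representative
  set f' : ℝ → ℂ := hf.1.mk f with hf'def
  have hf'sm : StronglyMeasurable f' := hf.1.stronglyMeasurable_mk
  have hff' : f =ᵐ[volume.restrict (Set.Ioc (-1:ℝ) 1)] f' := hf.1.ae_eq_mk
  have hf' : MemLp f' 2 (volume.restrict (Set.Ioc (-1:ℝ) 1)) := hf.ae_eq hff'
  -- the weighted function
  set g : ℝ → ℂ := fun t => f' t * Complex.exp (-(α:ℂ) * t) with hgdef
  have hgsm : StronglyMeasurable g :=
    hf'sm.mul (Complex.continuous_exp.comp (by continuity)).stronglyMeasurable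
  have hφ : MemLp (fun t : ℝ => Complex.exp (-(α:ℂ) * t)) ⊤
      (volume.restrict (Set.Ioc (-1:ℝ) 1)) := by
    refine memLp_top_of_bound
      ((Complex.continuous_exp.comp (by continuity)).aestronglyMeasurable) (Real.exp α) ?_
    filter_upwards [ae_restrict_mem measurableSet_Ioc] with t ht
    rw [Complex.norm_exp]
    have : (-(α:ℂ) * t).re = -α * t := by simp
    rw [this]
    apply Real.exp_le_exp.mpr
    nlinarith [ht.1, ht.2]
  have hg : MemLp g 2 (volume.restrict (Set.Ioc (-1:ℝ) 1)) := by
    have := MemLp.smul (r := 2) hf' hφ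
    have heq : (fun t : ℝ => Complex.exp (-(α:ℂ) * t)) • f' = g := by
      funext t; simp [hgdef, Pi.smul_apply, smul_eq_mul, mul_comm]
    rwa [heq] at this
  obtain ⟨hsum, htsum⟩ := parseval_Ioc g hgsm hg
  -- identify integrands
  have hfun : (fun n : ℤ => ‖∫ t in Set.Ioc (-1:ℝ) 1,
        f t * Complex.exp (Complex.I * ((Real.pi * n : ℝ) + α * Complex.I) * (t : ℂ))‖ ^ 2)
      = fun n : ℤ =>
        ‖∫ t in Set.Ioc (-1:ℝ) 1, g t * Complex.exp ((π : ℂ) * n * Complex.I * t)‖ ^ 2 := by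
    funext n
    congr 1
    congr 1
    refine integral_congr_ae ?_
    filter_upwards [hff'] with t ht
    rw [ht]
    rw [mul_assoc (f' t), ← Complex.exp_add]
    congr 1
    push_cast
    ring_nf
    rw [Complex.I_sq]
    ring
  rw [hfun]
  -- integral comparison
  have hI1 : Integrable (fun t : ℝ => ‖f' t‖ ^ 2) (volume.restrict (Set.Ioc (-1:ℝ) 1)) := by
    have := hf'.integrable_norm_rpow two_ne_zero ENNReal.ofNat_ne_top
    refine this.congr (Filter.Eventually.of_forall fun t => ?_)
    simp only [ENNReal.toReal_ofNat]
    rw [show ((2:ℝ)) = ((2:ℕ):ℝ) by norm_num, Real.rpow_natCast]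
  have hI2 : Integrable (fun t : ℝ => ‖g t‖ ^ 2) (volume.restrict (Set.Ioc (-1:ℝ) 1)) := by
    have := hg.integrable_norm_rpow two_ne_zero ENNReal.ofNat_ne_top
    refine this.congr (Filter.Eventually.of_forall fun t => ?_)
    simp only [ENNReal.toReal_ofNat]
    rw [show ((2:ℝ)) = ((2:ℕ):ℝ) by norm_num, Real.rpow_natCast]
  have hptle : ∀ᵐ t ∂(volume.restrict (Set.Ioc (-1:ℝ) 1)),
      ‖g t‖ ^ 2 ≤ Real.exp α ^ 2 * ‖f' t‖ ^ 2 := by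
    filter_upwards [ae_restrict_mem measurableSet_Ioc] with t ht
    rw [hgdef]
    rw [norm_mul, Complex.norm_exp]
    have hre : (-(α:ℂ) * t).re = -α * t := by simp
    rw [hre, mul_pow]
    have h1 : Real.exp (-α * t) ≤ Real.exp α := Real.exp_le_exp.mpr (by nlinarith [ht.1, ht.2])
    have h2 : (0:ℝ) ≤ Real.exp (-α * t) := (Real.exp_pos _).le
    nlinarith [pow_le_pow_left₀ h2 h1 2, sq_nonneg (‖f' t‖)]
  have hptge : ∀ᵐ t ∂(volume.restrict (Set.Ioc (-1:ℝ) 1)),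
      Real.exp (-α) ^ 2 * ‖f' t‖ ^ 2 ≤ ‖g t‖ ^ 2 := by
    filter_upwards [ae_restrict_mem measurableSet_Ioc] with t ht
    rw [hgdef]
    rw [norm_mul, Complex.norm_exp]
    have hre : (-(α:ℂ) * t).re = -α * t := by simp
    rw [hre, mul_pow]
    have h1 : Real.exp (-α) ≤ Real.exp (-α * t) := Real.exp_le_exp.mpr (by nlinarith [ht.1, ht.2])
    have h2 : (0:ℝ) ≤ Real.exp (-α) := (Real.exp_pos _).le
    nlinarith [pow_le_pow_left₀ h2 h1 2, sq_nonneg (‖f' t‖)]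
  have hle : (∫ t in Set.Ioc (-1:ℝ) 1, ‖g t‖ ^ 2)
      ≤ Real.exp α ^ 2 * ∫ t in Set.Ioc (-1:ℝ) 1, ‖f' t‖ ^ 2 := by
    rw [← integral_const_mul]
    exact integral_mono_ae hI2 (hI1.const_mul _) hptle
  have hge : Real.exp (-α) ^ 2 * (∫ t in Set.Ioc (-1:ℝ) 1, ‖f' t‖ ^ 2)
      ≤ ∫ t in Set.Ioc (-1:ℝ) 1, ‖g t‖ ^ 2 := by
    rw [← integral_const_mul]
    exact integral_mono_ae (hI1.const_mul _) hI2 hptge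
  have hAnn : (0:ℝ) ≤ ∫ t in Set.Ioc (-1:ℝ) 1, ‖f' t‖ ^ 2 :=
    integral_nonneg fun t => sq_nonneg _
  have hBnn : (0:ℝ) ≤ ∫ t in Set.Ioc (-1:ℝ) 1, ‖g t‖ ^ 2 :=
    integral_nonneg fun t => sq_nonneg _
  have hfint : (∫ t in Set.Ioc (-1:ℝ) 1, ‖f t‖ ^ 2) = ∫ t in Set.Ioc (-1:ℝ) 1, ‖f' t‖ ^ 2 := by
    refine integral_congr_ae ?_
    filter_upwards [hff'] with t ht
    rw [ht]
  refine ⟨hsum, ?_, ?_⟩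
  · rw [htsum, hfint]
    have key : Real.sqrt 2 * Real.exp (-α) * Real.sqrt (∫ t in Set.Ioc (-1:ℝ) 1, ‖f' t‖ ^ 2)
        = Real.sqrt (2 * (Real.exp (-α) ^ 2 * ∫ t in Set.Ioc (-1:ℝ) 1, ‖f' t‖ ^ 2)) := by
      rw [Real.sqrt_mul (by norm_num : (0:ℝ) ≤ 2), Real.sqrt_mul (sq_nonneg _),
        Real.sqrt_sq (Real.exp_pos _).le, mul_assoc]
    rw [key]
    apply Real.sqrt_le_sqrt
    linarith [hge]
  · rw [htsum, hfint]
    have key : Real.sqrt 2 * Real.exp α * Real.sqrt (∫ t in Set.Ioc (-1:ℝ) 1, ‖f' t‖ ^ 2)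
        = Real.sqrt (2 * (Real.exp α ^ 2 * ∫ t in Set.Ioc (-1:ℝ) 1, ‖f' t‖ ^ 2)) := by
      rw [Real.sqrt_mul (by norm_num : (0:ℝ) ≤ 2), Real.sqrt_mul (sq_nonneg _),
        Real.sqrt_sq (Real.exp_pos _).le, mul_assoc]
    rw [key]
    apply Real.sqrt_le_sqrt
    linarith [hle]
end
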